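/- Let A and B be m×n complex matrices and E = B − A. Define α₁ := ‖A†‖₂²(‖A†E‖_F² − ‖A†EB†B‖_F²) + ‖B†‖₂²(‖EB†‖_F² − ‖AA†EB†‖_F²) and α₂ := ‖A†‖₂²(‖EA†‖_F² − ‖BB†EA†‖_F²) + ‖B†‖₂²(‖B†E‖_F² − ‖B†EA†A‖_F²). Then ‖B† − A†‖_F² ≤ min{α₁ + ‖B†EA†‖_F², α₂ + ‖A†EB†‖_F²}. -/

import Mathlib

open Matrix

/-- The square of the Frobenius norm of a complex matrix. -/
noncomputable def frobSq {α β : Type*} [Fintype α] [Fintype β] (M : Matrix α β ℂ) : ℝ :=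
  ∑ i, ∑ j, ‖M i j‖ ^ 2

/-- The spectral norm (ℓ²-operator norm) of a complex matrix. -/
noncomputable def spec {α β : Type*} [Fintype α] [Fintype β] [DecidableEq β]
    (M : Matrix α β ℂ) : ℝ :=
  ‖LinearMap.toContinuousLinearMap (Matrix.toEuclideanLin M)‖

/-- `X` is the Moore–Penrose inverse of `M` (the four Penrose equations). -/
def IsMoorePenrose {α β : Type*} [Fintype α] [Fintype β]
    (M : Matrix α β ℂ) (X : Matrix β α ℂ) : Prop :=
  M * X * M = M ∧ X * M * X = X ∧ (M * X)ᴴ = M * X ∧ (X * M)ᴴ = X * M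

section FrobLemmas

variable {α β γ : Type*} [Fintype α] [Fintype β] [Fintype γ]

open scoped Matrix.Norms.L2Operator in
lemma spec_eq_norm [DecidableEq β] (M : Matrix α β ℂ) : spec M = ‖M‖ := rfl

open scoped Matrix.Norms.L2Operator in
lemma spec_conjT [DecidableEq α] [DecidableEq β] (M : Matrix α β ℂ) : spec Mᴴ = spec M := by
  rw [spec_eq_norm, spec_eq_norm, Matrix.l2_opNorm_conjTranspose]

lemma frobSq_trace (M : Matrix α β ℂ) :
    frobSq M = (Matrix.trace (Mᴴ * M)).re := by
  simp [frobSq, Matrix.trace, Matrix.mul_apply, Matrix.diag, Complex.re_sum]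
  rw [Finset.sum_comm]
  congr 1; ext i; congr 1; ext j
  simp [conjTranspose_apply, ← Complex.normSq_eq_conj_mul_self, Complex.sq_norm,
    Complex.normSq_apply]

lemma frobSq_conjT (M : Matrix α β ℂ) : frobSq Mᴴ = frobSq M := by
  rw [frobSq, frobSq, Finset.sum_comm]
  simp [conjTranspose_apply]

lemma frobSq_neg (M : Matrix α β ℂ) : frobSq (-M) = frobSq M := by simp [frobSq]

lemma frobSq_add (X Y : Matrix α β ℂ) :
    frobSq (X + Y) = frobSq X + frobSq Y + 2 * (Matrix.trace (Xᴴ * Y)).re := by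
  rw [frobSq_trace, frobSq_trace, frobSq_trace]
  have h : (X + Y)ᴴ * (X + Y) = Xᴴ * X + (Xᴴ * Y + (Yᴴ * X + Yᴴ * Y)) := by
    simp [conjTranspose_add, Matrix.add_mul, Matrix.mul_add]; abel
  rw [h]
  have h2 : Matrix.trace (Yᴴ * X) = star (Matrix.trace (Xᴴ * Y)) := by
    rw [← Matrix.trace_conjTranspose, conjTranspose_mul, conjTranspose_conjTranspose]
  simp [h2, Complex.add_re]
  ring

lemma frobSq_projL (P : Matrix α α ℂ) (hP : Pᴴ = P) (hPP : P * P = P) (X : Matrix α β ℂ) :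
    frobSq (X - P * X) = frobSq X - frobSq (P * X) := by
  have hz : (P * X)ᴴ * (X - P * X) = 0 := by
    rw [conjTranspose_mul, hP, Matrix.mul_sub]
    rw [show Xᴴ * P * (P * X) = Xᴴ * P * X by
      rw [Matrix.mul_assoc Xᴴ P, ← Matrix.mul_assoc P P X, hPP, Matrix.mul_assoc]]
    simp [Matrix.mul_assoc]
  have h := frobSq_add (P * X) (X - P * X)
  rw [hz] at h
  simp at h
  linarith

lemma frobSq_projR (P : Matrix β β ℂ) (hP : Pᴴ = P) (hPP : P * P = P) (X : Matrix α β ℂ) :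
    frobSq (X - X * P) = frobSq X - frobSq (X * P) := by
  have h1 : frobSq (X - X * P) = frobSq (Xᴴ - P * Xᴴ) := by
    rw [← frobSq_conjT (X - X * P), conjTranspose_sub, conjTranspose_mul, hP]
  rw [h1, frobSq_projL P hP hPP, frobSq_conjT, ← frobSq_conjT (X * P), conjTranspose_mul, hP]

lemma spec_mul_le [DecidableEq β] (M : Matrix α β ℂ) (X : Matrix β γ ℂ) :
    frobSq (M * X) ≤ spec M ^ 2 * frobSq X := by
  have hcol : ∀ j, ∑ i, ‖(M * X) i j‖ ^ 2 ≤ spec M ^ 2 * ∑ k, ‖X k j‖ ^ 2 := by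
    intro j
    set v : EuclideanSpace ℂ β := (WithLp.equiv 2 _).symm (fun k => X k j) with hv
    have hnv : ‖v‖ ^ 2 = ∑ k, ‖X k j‖ ^ 2 := by
      rw [EuclideanSpace.norm_eq, Real.sq_sqrt (by positivity)]
      rfl
    have happ : (LinearMap.toContinuousLinearMap (Matrix.toEuclideanLin M)) v
        = (WithLp.equiv 2 (α → ℂ)).symm (M *ᵥ fun k => X k j) := by
      simp [hv, LinearMap.coe_toContinuousLinearMap']
    have hle : ‖(WithLp.equiv 2 (α → ℂ)).symm (M *ᵥ fun k => X k j)‖ ≤ spec M * ‖v‖ := by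
      rw [← happ]; exact (LinearMap.toContinuousLinearMap (Matrix.toEuclideanLin M)).le_opNorm v
    have hsq : ∑ i, ‖(M * X) i j‖ ^ 2
        = ‖(WithLp.equiv 2 (α → ℂ)).symm (M *ᵥ fun k => X k j)‖ ^ 2 := by
      rw [EuclideanSpace.norm_eq, Real.sq_sqrt (by positivity)]
      congr 1
    calc ∑ i, ‖(M * X) i j‖ ^ 2
        = ‖(WithLp.equiv 2 (α → ℂ)).symm (M *ᵥ fun k => X k j)‖ ^ 2 := hsq
      _ ≤ (spec M * ‖v‖) ^ 2 := by
          apply pow_le_pow_left₀ (norm_nonneg _) hle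
      _ = spec M ^ 2 * ∑ k, ‖X k j‖ ^ 2 := by rw [mul_pow, hnv]
  calc frobSq (M * X) = ∑ j, ∑ i, ‖(M * X) i j‖ ^ 2 := by rw [frobSq, Finset.sum_comm]
    _ ≤ ∑ j, spec M ^ 2 * ∑ k, ‖X k j‖ ^ 2 := Finset.sum_le_sum (fun j _ => hcol j)
    _ = spec M ^ 2 * frobSq X := by rw [← Finset.mul_sum, frobSq, Finset.sum_comm]

lemma retrace_comm (X Y : Matrix α β ℂ) :
    (Matrix.trace (Xᴴ * Y)).re = (Matrix.trace (Yᴴ * X)).re := by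
  have h : Matrix.trace (Yᴴ * X) = star (Matrix.trace (Xᴴ * Y)) := by
    rw [← Matrix.trace_conjTranspose, conjTranspose_mul, conjTranspose_conjTranspose]
  rw [h, Complex.star_def, Complex.conj_re]

end FrobLemmas

namespace IsMoorePenrose

variable {α β : Type*} [Fintype α] [Fintype β] {M : Matrix α β ℂ} {X : Matrix β α ℂ}

lemma c1 (h : IsMoorePenrose M X) : M * (X * M) = M := by rw [← Matrix.mul_assoc]; exact h.1
lemma c2 (h : IsMoorePenrose M X) : X * (M * X) = X := by rw [← Matrix.mul_assoc]; exact h.2.1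
lemma c3 (h : IsMoorePenrose M X) : Mᴴ * (M * X) = Mᴴ := by
  calc Mᴴ * (M * X) = Mᴴ * (M * X)ᴴ := by rw [h.2.2.1]
    _ = (M * X * M)ᴴ := by rw [conjTranspose_mul (M * X) M]
    _ = Mᴴ := by rw [h.1]
lemma c5 (h : IsMoorePenrose M X) : Xᴴ * (X * M) = Xᴴ := by
  calc Xᴴ * (X * M) = Xᴴ * (X * M)ᴴ := by rw [h.2.2.2]
    _ = (X * M * X)ᴴ := by rw [conjTranspose_mul (X * M) X]
    _ = Xᴴ := by rw [h.2.1]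
lemma projMX (h : IsMoorePenrose M X) : (M * X) * (M * X) = M * X := by
  rw [← Matrix.mul_assoc, h.1]
lemma projXM (h : IsMoorePenrose M X) : (X * M) * (X * M) = X * M := by
  rw [← Matrix.mul_assoc, h.2.1]
lemma conjT (h : IsMoorePenrose M X) : IsMoorePenrose Mᴴ Xᴴ := by
  refine ⟨?_, ?_, ?_, ?_⟩
  · rw [← conjTranspose_mul, ← conjTranspose_mul, c1 h]
  · rw [← conjTranspose_mul, ← conjTranspose_mul, c2 h]
  · rw [← conjTranspose_mul, conjTranspose_conjTranspose, h.2.2.2]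
  · rw [← conjTranspose_mul, conjTranspose_conjTranspose, h.2.2.1]

end IsMoorePenrose

lemma bound1 {ι κ : Type*} [Fintype ι] [Fintype κ] [DecidableEq ι] [DecidableEq κ]
    (A B : Matrix ι κ ℂ) (a b : Matrix κ ι ℂ)
    (hA : IsMoorePenrose A a) (hB : IsMoorePenrose B b)
    (E : Matrix ι κ ℂ) (hE : E = B - A) :
    frobSq (b - a) ≤
      spec a ^ 2 * (frobSq (a * E) - frobSq (a * E * b * B))
        + spec b ^ 2 * (frobSq (E * b) - frobSq (A * a * E * b))
        + frobSq (b * E * a) := by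
  -- decomposition
  have hD : b - a = -(b*E*a) + ((b - b*(A*a)) + (b*B*a - a)) := by
    subst hE
    simp only [Matrix.mul_sub, Matrix.sub_mul, Matrix.mul_assoc]
    abel
  -- conjugate transposes of the pieces
  have hT2h : (b - b*(A*a))ᴴ = bᴴ - (A*a)*bᴴ := by
    rw [conjTranspose_sub, conjTranspose_mul, hA.2.2.1]
  have hT3h : (b*B*a - a)ᴴ = aᴴ*(b*B) - aᴴ := by
    rw [conjTranspose_sub, conjTranspose_mul, hB.2.2.2]
  -- contraction facts
  have k_a : a*(A*a) = a := hA.c2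
  have k_bB : bᴴ*(b*B) = bᴴ := hB.c5
  -- orthogonality
  have k0 : bᴴ * (b*B*a - a) = 0 := by
    rw [Matrix.mul_sub, ← Matrix.mul_assoc, k_bB, sub_self]
  have z23 : (b - b*(A*a))ᴴ * (b*B*a - a) = 0 := by
    rw [hT2h, Matrix.sub_mul, k0, Matrix.mul_assoc, k0, Matrix.mul_zero, sub_self]
  have z31 : (b*B*a - a)ᴴ * (b*E*a) = 0 := by
    rw [hT3h, Matrix.sub_mul]
    have h1 : (aᴴ*(b*B))*(b*E*a) = aᴴ*(b*E*a) := by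
      rw [Matrix.mul_assoc aᴴ (b*B) _]
      congr 1
      rw [← Matrix.mul_assoc, ← Matrix.mul_assoc, hB.2.1]
    rw [h1, sub_self]
  have tr21 : Matrix.trace ((b - b*(A*a))ᴴ * -(b*E*a)) = 0 := by
    rw [hT2h, Matrix.mul_neg, Matrix.trace_neg, Matrix.sub_mul, Matrix.trace_sub]
    have h1 : Matrix.trace (((A*a)*bᴴ)*(b*E*a)) = Matrix.trace (bᴴ*(b*E*a)) := by
      rw [Matrix.mul_assoc, Matrix.trace_mul_comm, Matrix.mul_assoc bᴴ (b*E*a) (A*a),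
        Matrix.mul_assoc (b*E) a (A*a), k_a]
    rw [h1, sub_self, neg_zero]
  have cross1 : (Matrix.trace ((-(b*E*a))ᴴ * ((b - b*(A*a)) + (b*B*a - a)))).re = 0 := by
    rw [Matrix.mul_add, Matrix.trace_add, Complex.add_re,
      retrace_comm (-(b*E*a)) (b - b*(A*a)), retrace_comm (-(b*E*a)) (b*B*a - a),
      tr21, Matrix.mul_neg, z31, neg_zero, Matrix.trace_zero]
    simp
  have cross2 : (Matrix.trace ((b - b*(A*a))ᴴ * (b*B*a - a))).re = 0 := by
    rw [z23, Matrix.trace_zero]; simp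
  -- Pythagoras
  have pyth : frobSq (b - a)
      = frobSq (b*E*a) + frobSq (b - b*(A*a)) + frobSq (b*B*a - a) := by
    rw [hD, frobSq_add, cross1, frobSq_add (b - b*(A*a)) (b*B*a - a), cross2, frobSq_neg]
    ring
  -- key identities
  have f1 : bᴴ*Bᴴ = B*b := by rw [← conjTranspose_mul, hB.2.2.1]
  have t1fact : b*(bᴴ*Bᴴ) = b := by rw [f1, hB.c2]
  have f2 : Aᴴ*(A*a) = Aᴴ := hA.c3
  have g1 : ∀ (Z : Matrix ι ι ℂ), bᴴ*(Bᴴ*Z) = B*(b*Z) := by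
    intro Z
    rw [← Matrix.mul_assoc, f1, Matrix.mul_assoc]
  have g2 : ∀ (Z : Matrix ι ι ℂ), b*(B*(b*Z)) = b*Z := by
    intro Z
    rw [← Matrix.mul_assoc, ← Matrix.mul_assoc, hB.2.1]
  have g4 : ∀ (Z : Matrix κ κ ℂ), aᴴ*(a*(A*Z)) = aᴴ*Z := by
    intro Z
    rw [← Matrix.mul_assoc a A Z, ← Matrix.mul_assoc aᴴ (a*A) Z, hA.c5]
  have I2 : b - b*(A*a) = b * (bᴴ * (Eᴴ - Eᴴ*(A*a))) := by
    have hEh : Eᴴ = Bᴴ - Aᴴ := by rw [hE, conjTranspose_sub]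
    rw [hEh]
    simp only [Matrix.mul_sub, Matrix.sub_mul, Matrix.mul_assoc]
    rw [g1 (A*a), g2 (A*a), f2, t1fact]
    abel
  have I3h : (b*B*a - a)ᴴ = aᴴ * (a * (E - E*(b*B))) := by
    rw [hT3h, hE]
    simp only [Matrix.mul_sub, Matrix.sub_mul, Matrix.mul_assoc]
    rw [g4 (b*B), hA.c5, hB.c1]
    abel
  -- bounds on the pieces
  have hT2b : frobSq (b - b*(A*a)) ≤ spec b ^ 2 * (frobSq (E*b) - frobSq ((A*a)*(E*b))) := by
    rw [I2]
    calc frobSq (b * (bᴴ * (Eᴴ - Eᴴ*(A*a))))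
        ≤ spec b ^ 2 * frobSq (bᴴ * (Eᴴ - Eᴴ*(A*a))) := spec_mul_le _ _
      _ = spec b ^ 2 * (frobSq (E*b) - frobSq ((A*a)*(E*b))) := by
          congr 1
          have hW : (bᴴ * (Eᴴ - Eᴴ*(A*a)))ᴴ = E*b - (A*a)*(E*b) := by
            rw [conjTranspose_mul, conjTranspose_sub, conjTranspose_mul,
              conjTranspose_conjTranspose, conjTranspose_conjTranspose, hA.2.2.1,
              Matrix.sub_mul, Matrix.mul_assoc]
          rw [← frobSq_conjT, hW, frobSq_projL (A*a) hA.2.2.1 hA.projMX]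
  have hT3b : frobSq (b*B*a - a) ≤ spec a ^ 2 * (frobSq (a*E) - frobSq ((a*E)*(b*B))) := by
    rw [← frobSq_conjT (b*B*a - a), I3h]
    calc frobSq (aᴴ * (a * (E - E*(b*B))))
        ≤ spec aᴴ ^ 2 * frobSq (a * (E - E*(b*B))) := spec_mul_le _ _
      _ = spec a ^ 2 * (frobSq (a*E) - frobSq ((a*E)*(b*B))) := by
          rw [spec_conjT]
          congr 1
          rw [Matrix.mul_sub, ← Matrix.mul_assoc a E (b*B)]
          exact frobSq_projR (b*B) hB.2.2.2 hB.projXM (a*E)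
  rw [show frobSq (a*E*b*B) = frobSq ((a*E)*(b*B)) from by rw [Matrix.mul_assoc (a*E) b B],
    show frobSq (A*a*E*b) = frobSq ((A*a)*(E*b)) from by rw [Matrix.mul_assoc (A*a) E b],
    pyth]
  linarith

theorem stmt2 {m n : ℕ}
    (A B : Matrix (Fin m) (Fin n) ℂ)
    (Adag Bdag : Matrix (Fin n) (Fin m) ℂ)
    (hA : IsMoorePenrose A Adag) (hB : IsMoorePenrose B Bdag)
    (E : Matrix (Fin m) (Fin n) ℂ) (hE : E = B - A)
    :
    frobSq (Bdag - Adag) ≤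
      min
        (spec Adag ^ 2 * (frobSq (Adag * E) - frobSq (Adag * E * Bdag * B))
          + spec Bdag ^ 2 * (frobSq (E * Bdag) - frobSq (A * Adag * E * Bdag))
          + frobSq (Bdag * E * Adag))
        (spec Adag ^ 2 * (frobSq (E * Adag) - frobSq (B * Bdag * E * Adag))
          + spec Bdag ^ 2 * (frobSq (Bdag * E) - frobSq (Bdag * E * Adag * A))
          + frobSq (Adag * E * Bdag)) := by
  refine le_min (bound1 A B Adag Bdag hA hB E hE) ?_
  have h := bound1 Aᴴ Bᴴ Adagᴴ Bdagᴴ hA.conjT hB.conjT Eᴴ (by rw [hE, conjTranspose_sub])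
  simp only [← conjTranspose_mul, ← conjTranspose_sub, frobSq_conjT, spec_conjT] at h
  simp only [Matrix.mul_assoc] at h ⊢
  exact h
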